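/- Let P be a stochastic matrix with positive stationary distribution d, D = diag(d), and Γ diagonal with entries in [0,1] such that ρ(P^T Γ) < 1. Then the affine operator T̄ y = c + D^{-1} P^T Γ D y is a contraction mapping with respect to some weighted maximum norm ||·||^w_∞ with strictly positive weight vector w. -/

import Mathlib

open Matrix Filter

attribute [local instance] Matrix.linftyOpNormedRing Matrix.linftyOpNormedAlgebra

lemma entry_abs_le_norm {n : ℕ} (M : Matrix (Fin n) (Fin n) ℂ) (i j : Fin n) :
    ‖M i j‖ ≤ ‖M‖ := by
  have h : ‖M i j‖₊ ≤ ‖M‖₊ := by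
    rw [Matrix.linfty_opNNNorm_def]
    exact le_trans (Finset.single_le_sum (f := fun j => ‖M i j‖₊)
      (fun _ _ => zero_le) (Finset.mem_univ j))
      (Finset.le_sup (f := fun i => ∑ j, ‖M i j‖₊) (Finset.mem_univ i))
  exact_mod_cast h

noncomputable def specRad {n : ℕ} (Y : Matrix (Fin n) (Fin n) ℝ) : ℝ :=
  sSup ((fun μ => ‖μ‖) '' spectrum ℂ (Y.map ((↑) : ℝ → ℂ)))

lemma geom_bound {n : ℕ} [NeZero n] (B : Matrix (Fin n) (Fin n) ℝ)
    (hB : specRad B < 1) :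
    ∃ r : ℝ, 0 ≤ r ∧ r < 1 ∧ ∃ N : ℕ, ∀ m, N ≤ m → ∀ i j, |(B ^ m) i j| ≤ r ^ m := by
  set Bc : Matrix (Fin n) (Fin n) ℂ := B.map ((↑) : ℝ → ℂ) with hBc
  haveI : CompleteSpace (Matrix (Fin n) (Fin n) ℂ) := FiniteDimensional.complete ℂ _
  have hne : (spectrum ℂ Bc).Nonempty := spectrum.nonempty Bc
  have hlt : ∀ k ∈ spectrum ℂ Bc, ‖k‖₊ < 1 := by
    intro k hk
    have hbdd : BddAbove ((fun μ => ‖μ‖) '' spectrum ℂ Bc) :=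
      ((Matrix.finite_spectrum Bc).image _).bddAbove
    have h1 : ‖k‖ ≤ specRad B := le_csSup hbdd ⟨k, hk, rfl⟩
    have h2 : ‖k‖ < 1 := by exact lt_of_le_of_lt h1 hB
    rw [← NNReal.coe_lt_coe]; simpa using h2
  have hρ' : spectralRadius ℂ Bc < 1 := by
    have := spectrum.spectralRadius_lt_of_forall_lt_of_nonempty hne (r := 1) hlt
    simpa using this
  obtain ⟨ρr, hρr1, hρr2⟩ := exists_between hρ'
  have hρrtop : ρr ≠ ⊤ := (hρr2.trans_le le_top).ne
  set r : NNReal := ρr.toNNReal with hr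
  have hrρ : (r : ENNReal) = ρr := ENNReal.coe_toNNReal hρrtop
  have hr1 : (r : ℝ) < 1 := by
    have : (r : ENNReal) < 1 := by rw [hrρ]; exact hρr2
    exact_mod_cast this
  have htend := spectrum.pow_nnnorm_pow_one_div_tendsto_nhds_spectralRadius Bc
  have hev : ∀ᶠ m : ℕ in atTop, (‖Bc ^ m‖₊ : ENNReal) ^ (1 / (m : ℝ)) < ρr :=
    htend.eventually_lt_const hρr1
  obtain ⟨N, hN⟩ := (hev.and (eventually_ge_atTop 1)).exists_forall_of_atTop
  refine ⟨r, r.coe_nonneg, hr1, N, fun m hm i j => ?_⟩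
  obtain ⟨h1, h2⟩ := hN m hm
  have hmne : (m : ℝ) ≠ 0 := Nat.cast_ne_zero.mpr (by omega)
  have hpow : (‖Bc ^ m‖₊ : ENNReal) ≤ ρr ^ (m : ℝ) := by
    have := ENNReal.rpow_le_rpow h1.le (z := (m : ℝ)) (Nat.cast_nonneg m)
    rwa [← ENNReal.rpow_mul, one_div, inv_mul_cancel₀ hmne, ENNReal.rpow_one] at this
  have hpow' : ‖Bc ^ m‖₊ ≤ r ^ m := by
    have : (‖Bc ^ m‖₊ : ENNReal) ≤ ((r ^ m : NNReal) : ENNReal) := by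
      rw [ENNReal.coe_pow, hrρ, ← ENNReal.rpow_natCast]; exact hpow
    exact_mod_cast this
  have hnorm : ‖Bc ^ m‖ ≤ (r : ℝ) ^ m := by exact_mod_cast hpow'
  have hmap : Bc ^ m = (B ^ m).map ((↑) : ℝ → ℂ) := by
    rw [hBc]
    have : (Complex.ofRealHom.mapMatrix (B ^ m) : Matrix (Fin n) (Fin n) ℂ)
        = (Complex.ofRealHom.mapMatrix B) ^ m := map_pow _ _ _
    simp only [RingHom.mapMatrix_apply] at this; exact this.symm
  have := entry_abs_le_norm (Bc ^ m) i j
  rw [hmap] at this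
  rw [hmap] at hnorm
  simp only [Matrix.map_apply, Complex.norm_real, Real.norm_eq_abs] at this
  exact this.trans hnorm

noncomputable def vecWNorm {n : ℕ} (w : Fin n → ℝ) (y : Fin n → ℝ) : ℝ :=
  ⨆ i, |y i / w i|

theorem stmt_6 {n : ℕ} (P : Matrix (Fin n) (Fin n) ℝ) (d γ : Fin n → ℝ) (c : Fin n → ℝ)
    (hPnn : ∀ s s', 0 ≤ P s s') (hProw : ∀ s, ∑ s', P s s' = 1)
    (hdpos : ∀ s, 0 < d s) (hdsum : ∑ s, d s = 1)
    (hstat : ∀ s', ∑ s, d s * P s s' = d s')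
    (hγ : ∀ s, γ s ∈ Set.Icc (0 : ℝ) 1)
    (hρ : specRad (Pᵀ * Matrix.diagonal γ) < 1) :
    let D := Matrix.diagonal d
    let T : (Fin n → ℝ) → (Fin n → ℝ) :=
      fun y => c + (D⁻¹ * Pᵀ * Matrix.diagonal γ * D).mulVec y
    ∃ (w : Fin n → ℝ) (k : ℝ), (∀ i, 0 < w i) ∧ k < 1 ∧
      ∀ y₁ y₂, vecWNorm w (T y₁ - T y₂) ≤ k * vecWNorm w (y₁ - y₂) := by
  intro D T
  rcases Nat.eq_zero_or_pos n with hn | hn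
  · subst hn
    refine ⟨fun _ => 1, 0, fun i => i.elim0, by norm_num, fun y₁ y₂ => ?_⟩
    simp only [vecWNorm]
    rw [iSup_of_empty' (α := ℝ), iSup_of_empty' (α := ℝ), Real.sSup_empty, mul_zero]
  haveI : NeZero n := ⟨hn.ne'⟩
  haveI : Nonempty (Fin n) := ⟨⟨0, hn⟩⟩
  set B : Matrix (Fin n) (Fin n) ℝ := Pᵀ * Matrix.diagonal γ with hB
  have hBnn : ∀ i j, 0 ≤ B i j := by
    intro i j
    rw [hB, Matrix.mul_diagonal]
    exact mul_nonneg (hPnn j i) (hγ j).1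
  set Dinv : Matrix (Fin n) (Fin n) ℝ := Matrix.diagonal (fun i => (d i)⁻¹) with hDinv
  have hDid : D * Dinv = 1 := by
    rw [hDinv]
    show Matrix.diagonal d * Matrix.diagonal (fun i => (d i)⁻¹) = 1
    rw [Matrix.diagonal_mul_diagonal]
    convert Matrix.diagonal_one
    exact mul_inv_cancel₀ (hdpos _).ne'
  have hDid2 : Dinv * D = 1 := by
    rw [hDinv]
    show Matrix.diagonal (fun i => (d i)⁻¹) * Matrix.diagonal d = 1
    rw [Matrix.diagonal_mul_diagonal]
    convert Matrix.diagonal_one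
    exact inv_mul_cancel₀ (hdpos _).ne'
  have hDinvEq : D⁻¹ = Dinv := Matrix.inv_eq_right_inv hDid
  set M : Matrix (Fin n) (Fin n) ℝ := Dinv * B * D with hM
  have hTM : D⁻¹ * Pᵀ * Matrix.diagonal γ * D = M := by
    rw [hM, hB, hDinvEq, Matrix.mul_assoc Dinv, ← Matrix.mul_assoc Dinv]
  have hMpow : ∀ m : ℕ, M ^ m = Dinv * B ^ m * D := by
    intro m
    induction m with
    | zero => simp [hDid2, Matrix.mul_one, pow_zero]
    | succ m ih =>
      have hcancel : ∀ X : Matrix (Fin n) (Fin n) ℝ, D * (Dinv * X) = X := by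
        intro X; rw [← Matrix.mul_assoc, hDid, Matrix.one_mul]
      rw [pow_succ, ih, hM, pow_succ]
      simp only [Matrix.mul_assoc]
      rw [hcancel]
  have hBpownn : ∀ m : ℕ, ∀ i j, 0 ≤ (B ^ m) i j := by
    intro m
    induction m with
    | zero => intro i j; rw [pow_zero]; by_cases h : i = j <;>
        simp [Matrix.one_apply, h]
    | succ m ih =>
      intro i j
      rw [pow_succ, Matrix.mul_apply]
      exact Finset.sum_nonneg fun l _ => mul_nonneg (ih i l) (hBnn l j)
  have hMentry : ∀ m : ℕ, ∀ i j, (M ^ m) i j = (d i)⁻¹ * (B ^ m) i j * d j := by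
    intro m i j
    rw [hMpow, Matrix.mul_diagonal, hDinv, Matrix.diagonal_mul]
  have hMnn : ∀ m : ℕ, ∀ i j, 0 ≤ (M ^ m) i j := by
    intro m i j
    rw [hMentry]
    have := hdpos i; have := hdpos j; have := hBpownn m i j
    positivity
  have hM1nn : ∀ i j, 0 ≤ M i j := by
    intro i j; have := hMnn 1 i j; rwa [pow_one] at this
  obtain ⟨r, hr0, hr1, N, hgeom⟩ := geom_bound B hρ
  have hBsum : ∀ i j, Summable (fun m : ℕ => |(B ^ m) i j|) := by
    intro i j
    rw [← summable_nat_add_iff N]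
    refine Summable.of_nonneg_of_le (fun m => abs_nonneg _) (fun m => ?_)
      ((summable_geometric_of_lt_one hr0 hr1).mul_right (r ^ N))
    rw [← pow_add]
    exact hgeom (m + N) (Nat.le_add_left N m) i j
  have hMsum : ∀ i j, Summable (fun m : ℕ => (M ^ m) i j) := by
    intro i j
    refine (((hBsum i j).mul_left ((d i)⁻¹)).mul_right (d j)).congr fun m => ?_
    rw [abs_of_nonneg (hBpownn m i j), ← hMentry]
  set s : Fin n → ℕ → ℝ := fun i m => ∑ j, (M ^ m) i j with hs
  have hssum : ∀ i, Summable (s i) := by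
    intro i
    exact summable_sum fun j _ => hMsum i j
  have hsnn : ∀ i m, 0 ≤ s i m := fun i m =>
    Finset.sum_nonneg fun j _ => hMnn m i j
  have hs0 : ∀ i, s i 0 = 1 := by
    intro i; simp [hs, Matrix.one_apply]
  set w : Fin n → ℝ := fun i => ∑' m, s i m with hw
  have hw1 : ∀ i, 1 ≤ w i := by
    intro i
    have := Summable.le_tsum (hssum i) 0 (fun m _ => hsnn i m)
    rwa [hs0 i] at this
  have hwpos : ∀ i, 0 < w i := fun i => lt_of_lt_of_le one_pos (hw1 i)
  have hrec : ∀ i, ∑ j, M i j * w j = w i - 1 := by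
    intro i
    have step1 : ∀ j : Fin n, M i j * w j = ∑' m, M i j * s j m := by
      intro j
      rw [hw, ← tsum_mul_left]
    have step2 : ∑ j, M i j * w j = ∑' m, ∑ j, M i j * s j m := by
      simp_rw [step1]
      exact (Summable.tsum_finsetSum (fun j _ => (hssum j).mul_left (M i j))).symm
    have step3 : ∀ m : ℕ, ∑ j, M i j * s j m = s i (m + 1) := by
      intro m
      simp only [hs, Finset.mul_sum]
      rw [Finset.sum_comm]
      refine Finset.sum_congr rfl fun l _ => ?_
      rw [pow_succ', Matrix.mul_apply]
    have step4 : ∑' m : ℕ, s i (m + 1) = w i - 1 := by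
      have := Summable.tsum_eq_zero_add (hssum i)
      rw [hs0 i] at this
      rw [hw]; linarith [this]
    rw [step2]
    simp_rw [step3]
    exact step4
  set W : ℝ := ⨆ i, w i with hW
  have hWle : ∀ i, w i ≤ W :=
    fun i => le_ciSup (Set.Finite.bddAbove (Set.finite_range w)) i
  have hW1 : 1 ≤ W := le_trans (hw1 (Classical.arbitrary _)) (hWle _)
  have hWpos : 0 < W := lt_of_lt_of_le one_pos hW1
  set k : ℝ := 1 - 1 / W with hk
  have hk1 : k < 1 := by
    rw [hk]; have : 0 < 1 / W := by positivity
    linarith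
  refine ⟨w, k, hwpos, hk1, fun y₁ y₂ => ?_⟩
  have hTdiff : T y₁ - T y₂ = M.mulVec (y₁ - y₂) := by
    show (c + (D⁻¹ * Pᵀ * Matrix.diagonal γ * D).mulVec y₁)
        - (c + (D⁻¹ * Pᵀ * Matrix.diagonal γ * D).mulVec y₂) = M.mulVec (y₁ - y₂)
    rw [hTM, add_sub_add_left_eq_sub, ← Matrix.mulVec_sub]
  rw [hTdiff]
  set x : Fin n → ℝ := y₁ - y₂ with hx
  set V : ℝ := vecWNorm w x with hV
  have hbddx : BddAbove (Set.range fun i => |x i / w i|) :=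
    Set.Finite.bddAbove (Set.finite_range _)
  have hVle : ∀ i, |x i / w i| ≤ V := fun i => le_ciSup hbddx i
  have hV0 : 0 ≤ V :=
    le_trans (abs_nonneg _) (hVle (Classical.arbitrary _))
  have habs : ∀ j, |x j| ≤ w j * V := by
    intro j
    have h1 : |x j / w j| = |x j| / w j := by
      rw [abs_div, abs_of_pos (hwpos j)]
    have := hVle j
    rw [h1, div_le_iff₀ (hwpos j)] at this
    linarith [this]
  have hbound : ∀ i, |(M.mulVec x) i / w i| ≤ k * V := by
    intro i
    have h1 : |(M.mulVec x) i| ≤ (w i - 1) * V := by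
      rw [Matrix.mulVec, dotProduct]
      calc |∑ j, M i j * x j| ≤ ∑ j, |M i j * x j| := Finset.abs_sum_le_sum_abs _ _
        _ ≤ ∑ j, M i j * (w j * V) := by
            refine Finset.sum_le_sum fun j _ => ?_
            rw [abs_mul, abs_of_nonneg (hM1nn i j)]
            exact mul_le_mul_of_nonneg_left (habs j) (hM1nn i j)
        _ = (∑ j, M i j * w j) * V := by rw [Finset.sum_mul]; simp_rw [mul_assoc]
        _ = (w i - 1) * V := by rw [hrec i]
    have h2 : |(M.mulVec x) i / w i| = |(M.mulVec x) i| / w i := by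
      rw [abs_div, abs_of_pos (hwpos i)]
    rw [h2, div_le_iff₀ (hwpos i)]
    calc |(M.mulVec x) i| ≤ (w i - 1) * V := h1
      _ ≤ k * V * w i := by
          have hky : (w i - 1) ≤ k * w i := by
            rw [hk]
            have h3 : 1 / W * w i ≤ 1 := by
              rw [div_mul_eq_mul_div, mul_comm, ← div_mul_eq_mul_div]
              have : w i / W ≤ 1 := (div_le_one hWpos).mpr (hWle i)
              linarith [this]
            have h4 : (1 - 1 / W) * w i = w i - 1 / W * w i := by ring
            linarith [h3, h4]
          nlinarith [hky, hV0, h1, abs_nonneg ((M.mulVec x) i)]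
    -- done
  exact ciSup_le hbound
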